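/- Let m : W → X and m' : W → Y be matrices of nonnegative reals each having exactly one nonzero entry in each row and at least one nonzero entry in each column, and let p : X → Z, p' : Y → Z be matrices of nonnegative reals with at most one nonzero entry in each column. If p ∘ m = p' ∘ m', then there exists a nonnegative matrix h : X → Y with h ∘ m = m' and p' ∘ h = p. -/

import Mathlib

open scoped NNReal

/-- Lifting lemma for matrices of nonnegative reals: if `m` and `m'` have exactly one
nonzero entry in each row and at least one nonzero entry in each column, `p` and `p'`
have at most one nonzero entry in each column, and `p ∘ m = p' ∘ m'`, then there is a
nonnegative matrix `h` with `h ∘ m = m'` and `p' ∘ h = p`. -/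
theorem stoch_lifting {W X Y Z : Type} [Fintype W] [Fintype X] [Fintype Y] [Fintype Z]
    (m : Matrix X W ℝ≥0) (m' : Matrix Y W ℝ≥0)
    (p : Matrix Z X ℝ≥0) (p' : Matrix Z Y ℝ≥0)
    (hm_row : ∀ x, ∃! w, m x w ≠ 0) (hm_col : ∀ w, ∃ x, m x w ≠ 0)
    (hm'_row : ∀ y, ∃! w, m' y w ≠ 0) (hm'_col : ∀ w, ∃ y, m' y w ≠ 0)
    (hp : ∀ x (z z' : Z), p z x ≠ 0 → p z' x ≠ 0 → z = z')
    (hp' : ∀ y (z z' : Z), p' z y ≠ 0 → p' z' y ≠ 0 → z = z')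
    (hsq : p * m = p' * m') :
    ∃ h : Matrix Y X ℝ≥0, h * m = m' ∧ p' * h = p := by
  classical
  choose wX hwX huX using hm_row
  choose wY hwY huY using hm'_row
  choose x₀ hx₀ using hm_col
  -- zero lemmas
  have mzero : ∀ x w, w ≠ wX x → m x w = 0 := by
    intro x w hw
    by_contra hne
    exact hw (huX x w hne)
  have m'zero : ∀ y w, w ≠ wY y → m' y w = 0 := by
    intro y w hw
    by_contra hne
    exact hw (huY y w hne)
  have hwXx₀ : ∀ w, wX (x₀ w) = w := fun w => (huX (x₀ w) w (hx₀ w)).symm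
  -- pointwise version of hsq
  have hsqe : ∀ z w, (p * m) z w = (p' * m') z w := fun z w => by rw [hsq]
  refine ⟨fun y x =>
    if hz : ∃ z, p' z y ≠ 0 then
      (if wX x = wY y then m' y (wY y) * p hz.choose x / (p * m) hz.choose (wY y) else 0)
    else
      (if x = x₀ (wY y) then m' y (wY y) / m (x₀ (wY y)) (wY y) else 0), ?_, ?_⟩
  · -- h * m = m'
    ext y w
    erw [Matrix.mul_apply]

    by_cases hz : ∃ z, p' z y ≠ 0
    · simp only [dif_pos hz]
      set z₀ := hz.choose with hz₀def
      have hz₀ : p' z₀ y ≠ 0 := hz.choose_spec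
      have hMne : (p * m) z₀ (wY y) ≠ 0 := by
        rw [hsqe, Matrix.mul_apply]
        intro hsum
        have := (Finset.sum_eq_zero_iff.mp hsum) y (Finset.mem_univ y)
        exact (mul_ne_zero hz₀ (hwY y)) this
      by_cases hw : w = wY y
      · subst hw
        have step : ∀ x ∈ Finset.univ, (if wX x = wY y then
            m' y (wY y) * p z₀ x / (p * m) z₀ (wY y) else 0) * m x (wY y)
            = (m' y (wY y) / (p * m) z₀ (wY y)) * (p z₀ x * m x (wY y)) := by
          intro x _
          by_cases hx : wX x = wY y
          · rw [if_pos hx, div_eq_mul_inv, div_eq_mul_inv]; ring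
          · rw [if_neg hx, mzero x (wY y) (fun hc => hx hc.symm)]
            simp
        rw [Finset.sum_congr rfl step, ← Finset.mul_sum, ← Matrix.mul_apply,
          div_mul_cancel₀ _ hMne]
      · rw [m'zero y w hw]
        refine congrArg _ (Finset.sum_eq_zero fun x _ => ?_)
        by_cases hx : wX x = wY y
        · rw [mzero x w (fun hc => hw (hc.trans hx)), mul_zero]
        · rw [if_neg hx, zero_mul]
    · simp only [dif_neg hz]
      rw [Finset.sum_eq_single (x₀ (wY y))]
      · rw [if_pos rfl]
        by_cases hw : w = wY y
        · subst hw
          rw [div_mul_cancel₀ _ (hx₀ (wY y))]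
        · rw [mzero (x₀ (wY y)) w (by rw [hwXx₀]; exact hw), mul_zero,
            m'zero y w hw]
      · intro x _ hx
        rw [if_neg hx, zero_mul]
      · intro hmem; exact absurd (Finset.mem_univ _) hmem
  · -- p' * h = p
    ext z x
    erw [Matrix.mul_apply]

    have step : ∀ y ∈ Finset.univ, p' z y *
        (if hz : ∃ z, p' z y ≠ 0 then
          (if wX x = wY y then m' y (wY y) * p hz.choose x / (p * m) hz.choose (wY y) else 0)
        else
          (if x = x₀ (wY y) then m' y (wY y) / m (x₀ (wY y)) (wY y) else 0))
        = (p z x / (p * m) z (wX x)) * (p' z y * m' y (wX x)) := by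
      intro y _
      by_cases hpy : p' z y = 0
      · simp [hpy]
      · have hz : ∃ z, p' z y ≠ 0 := ⟨z, hpy⟩
        rw [dif_pos hz]
        have hzz : hz.choose = z := hp' y hz.choose z hz.choose_spec hpy
        rw [hzz]
        by_cases hw : wX x = wY y
        · rw [if_pos hw, hw]
          rw [div_eq_mul_inv, div_eq_mul_inv]; ring
        · rw [if_neg hw, m'zero y (wX x) hw]
          simp
    rw [Finset.sum_congr rfl step, ← Finset.mul_sum, ← Matrix.mul_apply, ← hsqe]
    by_cases hM : (p * m) z (wX x) = 0
    · have hpx : p z x = 0 := by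
        rw [Matrix.mul_apply] at hM
        have := (Finset.sum_eq_zero_iff.mp hM) x (Finset.mem_univ x)
        exact (mul_eq_zero.mp this).resolve_right (hwX x)
      simp [hpx, hM]
    · rw [div_mul_cancel₀ _ hM]
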